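/- Let k ≥ 1, n ≥ 2k+1, g = gcd(n,k), and s_i the cyclic right-shift by i of 1^k 0^k 0^{n-2k}, viewed as vertices of K(n,k). Let D be the set of g cycles C(s_i) = (s_{i+kj})_{j=0,...,n/g-1}, i = 0,...,g-1, in the Kneser graph. Then for any r ∈ {0,...,n-1}, the symmetric difference of the union of the edge sets of the cycles in D with the 4-cycles (s_{r+j}, s_{r+j+k}, s_{r+j+2k+1}, s_{r+j+k+1}) for j = 0,...,g-2 is a single cycle on the vertex set {s_0,...,s_{n-1}}. -/

import Mathlib

/-- Edges of the cycles `C(s_i)` of the factor, transported to the indices: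
`{a, a+k}` (an edge of the cycle through `s_a`). -/
def cycleEdge (n k : ℕ) (a b : ZMod n) : Prop :=
  b = a + (k : ZMod n) ∨ a = b + (k : ZMod n)

/-- `{a,b} = {u,v}` as unordered pairs. -/
def pairEq {α : Type*} (a b u v : α) : Prop := (a = u ∧ b = v) ∨ (a = v ∧ b = u)

lemma pairEq_comm {α : Type*} {a b u v : α} : pairEq a b u v ↔ pairEq b a u v :=
  ⟨fun h => h.elim (fun h => Or.inr ⟨h.2, h.1⟩) (fun h => Or.inl ⟨h.2, h.1⟩),
   fun h => h.elim (fun h => Or.inr ⟨h.2, h.1⟩) (fun h => Or.inl ⟨h.2, h.1⟩)⟩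

/-- Edges of the gluing 4-cycles `(s_{r+j}, s_{r+j+k}, s_{r+j+2k+1}, s_{r+j+k+1})`
for `j = 0,…,gcd(n,k)-2`, transported to the indices. -/
def gluingEdge (n k r : ℕ) (a b : ZMod n) : Prop :=
  ∃ j : ℕ, j + 1 < n.gcd k ∧
    (pairEq a b (((r + j : ℕ) : ZMod n)) (((r + j : ℕ) : ZMod n) + (k : ZMod n)) ∨
     pairEq a b (((r + j : ℕ) : ZMod n) + (k : ZMod n))
       (((r + j : ℕ) : ZMod n) + ((2 * k + 1 : ℕ) : ZMod n)) ∨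
     pairEq a b (((r + j : ℕ) : ZMod n) + ((2 * k + 1 : ℕ) : ZMod n))
       (((r + j : ℕ) : ZMod n) + ((k + 1 : ℕ) : ZMod n)) ∨
     pairEq a b (((r + j : ℕ) : ZMod n) + ((k + 1 : ℕ) : ZMod n)) (((r + j : ℕ) : ZMod n)))

lemma cycleEdge_comm {n k : ℕ} {a b : ZMod n} : cycleEdge n k a b ↔ cycleEdge n k b a :=
  Or.comm

lemma gluingEdge_comm {n k r : ℕ} {a b : ZMod n} :
    gluingEdge n k r a b ↔ gluingEdge n k r b a := by
  constructor <;>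
    (rintro ⟨j, hj, h | h | h | h⟩ <;>
      exact ⟨j, hj, by
        first
        | exact Or.inl (pairEq_comm.mp h)
        | exact Or.inr (Or.inl (pairEq_comm.mp h))
        | exact Or.inr (Or.inr (Or.inl (pairEq_comm.mp h)))
        | exact Or.inr (Or.inr (Or.inr (pairEq_comm.mp h)))⟩)

/-- The graph on the indices `i` of the vertices `s_i` whose edge set is the symmetric
difference of the union of the edge sets of the `gcd(n,k)` cycles of `D` with the edge
sets of the `gcd(n,k) - 1` gluing 4-cycles. -/
def symmDiffGraph (n k r : ℕ) : SimpleGraph (ZMod n) where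
  Adj a b := a ≠ b ∧ Xor' (cycleEdge n k a b) (gluingEdge n k r a b)
  symm := by
    constructor
    rintro a b ⟨hne, hx⟩
    refine ⟨hne.symm, ?_⟩
    rw [cycleEdge_comm (n := n), gluingEdge_comm (n := n)] at hx
    exact hx
  loopless := by constructor; rintro a ⟨hne, -⟩; exact hne rfl


namespace SDAux

variable {n k r : ℕ}

/-- The vertex with grid coordinates `(i,j)`: the index `r + i + j*k` in `ZMod n`. -/
def phi (n k r i j : ℕ) : ZMod n := ((r + i + j * k : ℕ) : ZMod n)

lemma phi_succ (i j : ℕ) : phi n k r i (j+1) = phi n k r i j + (k : ZMod n) := by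
  unfold phi; push_cast; ring

lemma two_k_gcd_le (hn : 2 * k + 1 ≤ n) : 2 * k + n.gcd k ≤ n := by
  have h1 : n.gcd k ∣ n - 2 * k := Nat.dvd_sub (Nat.gcd_dvd_left n k) (Dvd.dvd.mul_left (Nat.gcd_dvd_right n k) 2)
  have h2 : 0 < n - 2 * k := by omega
  have := Nat.le_of_dvd h2 h1
  omega

lemma gcd_pos (hn : 2 * k + 1 ≤ n) : 0 < n.gcd k := Nat.gcd_pos_of_pos_left _ (by omega)

lemma gcd_le_k (hk : 1 ≤ k) : n.gcd k ≤ k := Nat.gcd_le_right _ hk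

lemma three_le_m (hk : 1 ≤ k) (hn : 2 * k + 1 ≤ n) : 3 ≤ n / n.gcd k := by
  have h1 := two_k_gcd_le hn
  have h2 := gcd_le_k (n := n) hk
  have h3 := gcd_pos (n := n) (k := k) hn
  have h4 : 3 * n.gcd k ≤ n := by omega
  calc 3 = 3 * n.gcd k / n.gcd k := by rw [Nat.mul_div_cancel _ h3]
    _ ≤ n / n.gcd k := Nat.div_le_div_right h4

lemma m_mul_k_aux (g m' k' n k : ℕ) (h : 0 < g) (hm' : n = g * m') (hk' : k = g * k') :
    (n / g) * k = n * (k / g) := by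
  subst hm' hk'
  rw [Nat.mul_div_cancel_left _ h, Nat.mul_div_cancel_left _ h]
  ring

lemma m_mul_k : (n / n.gcd k) * k = n * (k / n.gcd k) := by
  obtain ⟨m', hm'⟩ := Nat.gcd_dvd_left n k
  obtain ⟨k', hk'⟩ := Nat.gcd_dvd_right n k
  rcases Nat.eq_zero_or_pos (n.gcd k) with h | h
  · have hn0 := Nat.eq_zero_of_gcd_eq_zero_left h
    have hk0 := Nat.eq_zero_of_gcd_eq_zero_right h
    simp [hn0, hk0]
  · exact m_mul_k_aux (n.gcd k) m' k' n k h hm' hk'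

lemma phi_m (i : ℕ) : phi n k r i (n / n.gcd k) = phi n k r i 0 := by
  unfold phi
  have h0 : ((n / n.gcd k * k : ℕ) : ZMod n) = 0 := by
    rw [m_mul_k, ZMod.natCast_eq_zero_iff]
    exact Dvd.intro _ rfl
  push_cast at h0 ⊢
  rw [h0]
  ring

lemma phi_eq (hk : 1 ≤ k) (hn : 2 * k + 1 ≤ n) {i i' j j' : ℕ}
    (hi : i < n.gcd k) (hi' : i' < n.gcd k)
    (hj : j < n / n.gcd k) (hj' : j' < n / n.gcd k)
    (h : phi n k r i j = phi n k r i' j') : i = i' ∧ j = j' := by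
  set g := n.gcd k with hg
  set m := n / n.gcd k with hm
  haveI : NeZero n := ⟨by omega⟩
  haveI : NeZero g := ⟨by have := gcd_pos (n := n) (k := k) hn; omega⟩
  have hgn : g ∣ n := Nat.gcd_dvd_left n k
  have hgk : g ∣ k := Nat.gcd_dvd_right n k
  have hmod : (r + i + j * k) ≡ (r + i' + j' * k) [MOD n] :=
    (ZMod.natCast_eq_natCast_iff _ _ _).mp h
  -- first components agree, working mod `g`
  have hii : i = i' := by
    have hmodg : (r + i + j * k) ≡ (r + i' + j' * k) [MOD g] := hmod.of_dvd hgn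
    have hcast : ((r + i + j * k : ℕ) : ZMod g) = ((r + i' + j' * k : ℕ) : ZMod g) :=
      (ZMod.natCast_eq_natCast_iff _ _ _).mpr hmodg
    have hk0 : ((k : ℕ) : ZMod g) = 0 := (ZMod.natCast_eq_zero_iff _ _).mpr hgk
    push_cast at hcast
    simp only [hk0, mul_zero, add_zero] at hcast
    have h2 : ((i : ℕ) : ZMod g) = ((i' : ℕ) : ZMod g) := add_left_cancel hcast
    have := congrArg ZMod.val h2
    rwa [ZMod.val_cast_of_lt hi, ZMod.val_cast_of_lt hi'] at this
  subst hii
  refine ⟨rfl, ?_⟩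
  have hjj : (j * k) ≡ (j' * k) [MOD n] :=
    Nat.ModEq.add_left_cancel' (n := n) (a := j * k) (b := j' * k) (r + i)
      (by simpa [add_assoc] using hmod)
  have hdvd : (n : ℤ) ∣ ((j : ℤ) - j') * k := by
    have h1 := (hjj.symm).dvd
    push_cast at h1 ⊢
    have : ((j : ℤ) - j') * k = (j : ℤ) * k - j' * k := by ring
    rw [this]
    exact h1
  have hgm : ((g : ℤ)) * m = n := by exact_mod_cast Nat.mul_div_cancel' hgn
  have hk' : (k : ℤ) = (g : ℤ) * ((k / g : ℕ) : ℤ) := by exact_mod_cast (Nat.mul_div_cancel' hgk).symm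
  have hmdvd : ((m : ℤ)) ∣ ((j : ℤ) - j') * ((k / g : ℕ) : ℤ) := by
    have hgpos : (0:ℤ) < g := by exact_mod_cast Nat.pos_of_ne_zero (NeZero.ne g)
    refine (mul_dvd_mul_iff_left (a := (g:ℤ)) (by omega)).mp ?_
    have heq : (g:ℤ) * (((j : ℤ) - j') * ((k / g : ℕ) : ℤ)) = ((j : ℤ) - j') * k := by
      rw [hk']; ring
    rw [heq, hgm]
    exact hdvd
  have hco : IsCoprime ((m : ℤ)) (((k / g : ℕ) : ℤ)) :=
    Nat.isCoprime_iff_coprime.mpr (Nat.coprime_div_gcd_div_gcd (gcd_pos hn))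
  have hmj : ((m : ℤ)) ∣ ((j : ℤ) - j') := hco.dvd_of_dvd_mul_right hmdvd
  have habs : |(j : ℤ) - j'| < m := by
    rw [abs_lt]; constructor <;> [push_cast; push_cast] <;> omega
  have := Int.eq_zero_of_abs_lt_dvd hmj habs
  omega

lemma glue_pt1 (j₀ : ℕ) : ((r + j₀ : ℕ) : ZMod n) = phi n k r j₀ 0 := by
  unfold phi; push_cast; ring

lemma glue_pt2 (j₀ : ℕ) : ((r + j₀ : ℕ) : ZMod n) + (k : ZMod n) = phi n k r j₀ 1 := by
  unfold phi; push_cast; ring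

lemma glue_pt3 (j₀ : ℕ) :
    ((r + j₀ : ℕ) : ZMod n) + ((2 * k + 1 : ℕ) : ZMod n) = phi n k r (j₀+1) 2 := by
  unfold phi; push_cast; ring

lemma glue_pt4 (j₀ : ℕ) :
    ((r + j₀ : ℕ) : ZMod n) + ((k + 1 : ℕ) : ZMod n) = phi n k r (j₀+1) 1 := by
  unfold phi; push_cast; ring

lemma not_gluing_horiz (hk : 1 ≤ k) (hn : 2 * k + 1 ≤ n) {i j : ℕ}
    (hi : i < n.gcd k) (hj : j < n / n.gcd k)
    (h0 : j = 0 → n.gcd k ≤ i + 1) (h1 : j = 1 → i = 0) :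
    ¬ gluingEdge n k r (phi n k r i j) (phi n k r i (j+1)) := by
  have hm3 := three_le_m (n := n) hk hn
  rintro ⟨j₀, hj₀, hP⟩
  have hj₀g : j₀ < n.gcd k := by omega
  have hj₀g1 : j₀ + 1 < n.gcd k := hj₀
  obtain ⟨j2, hj2m, hphi2, hj2⟩ :
      ∃ j2, j2 < n / n.gcd k ∧ phi n k r i (j+1) = phi n k r i j2 ∧
        (j + 1 = j2 ∨ (j + 1 = n / n.gcd k ∧ j2 = 0)) := by
    rcases Nat.lt_or_ge (j+1) (n / n.gcd k) with hlt | hge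
    · exact ⟨j+1, hlt, rfl, Or.inl rfl⟩
    · have hjm : j + 1 = n / n.gcd k := by omega
      exact ⟨0, by omega, by rw [hjm, phi_m], Or.inr ⟨hjm, rfl⟩⟩
  rw [glue_pt2 (n := n) (k := k) (r := r) j₀, glue_pt3 (n := n) (k := k) (r := r) j₀,
    glue_pt4 (n := n) (k := k) (r := r) j₀, glue_pt1 (n := n) (k := k) (r := r) j₀, hphi2] at hP
  simp only [pairEq] at hP
  rcases hP with (⟨ha, hb⟩|⟨ha, hb⟩)|(⟨ha, hb⟩|⟨ha, hb⟩)|(⟨ha, hb⟩|⟨ha, hb⟩)|(⟨ha, hb⟩|⟨ha, hb⟩)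
  · obtain ⟨e1, e2⟩ := phi_eq hk hn hi hj₀g hj (by omega) ha
    omega
  · obtain ⟨e1, e2⟩ := phi_eq hk hn hi hj₀g hj (by omega) ha
    obtain ⟨e3, e4⟩ := phi_eq hk hn hi hj₀g hj2m (by omega) hb
    omega
  · obtain ⟨e1, e2⟩ := phi_eq hk hn hi hj₀g hj (by omega) ha
    obtain ⟨e3, e4⟩ := phi_eq hk hn hi hj₀g1 hj2m (by omega) hb
    omega
  · obtain ⟨e1, e2⟩ := phi_eq hk hn hi hj₀g1 hj (by omega) ha
    obtain ⟨e3, e4⟩ := phi_eq hk hn hi hj₀g hj2m (by omega) hb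
    omega
  · obtain ⟨e1, e2⟩ := phi_eq hk hn hi hj₀g1 hj (by omega) ha
    obtain ⟨e3, e4⟩ := phi_eq hk hn hi hj₀g1 hj2m (by omega) hb
    omega
  · obtain ⟨e1, e2⟩ := phi_eq hk hn hi hj₀g1 hj (by omega) ha
    omega
  · obtain ⟨e1, e2⟩ := phi_eq hk hn hi hj₀g1 hj (by omega) ha
    omega
  · obtain ⟨e1, e2⟩ := phi_eq hk hn hi hj₀g hj (by omega) ha
    omega

lemma adj_row (hk : 1 ≤ k) (hn : 2 * k + 1 ≤ n) {i j : ℕ}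
    (hi : i < n.gcd k) (hj : j < n / n.gcd k)
    (h0 : j = 0 → n.gcd k ≤ i + 1) (h1 : j = 1 → i = 0) :
    (symmDiffGraph n k r).Adj (phi n k r i j) (phi n k r i (j+1)) := by
  have hm3 := three_le_m (n := n) hk hn
  constructor
  · intro h
    rcases Nat.lt_or_ge (j+1) (n / n.gcd k) with hlt | hge
    · obtain ⟨e1, e2⟩ := phi_eq hk hn hi hi hj hlt h
      omega
    · have hjm : j + 1 = n / n.gcd k := by omega
      rw [hjm, phi_m] at h
      obtain ⟨e1, e2⟩ := phi_eq hk hn hi hi hj (by omega) h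
      omega
  · exact Or.inl ⟨Or.inl (phi_succ i j), not_gluing_horiz hk hn hi hj h0 h1⟩

lemma adj_D1 (hk : 1 ≤ k) (hn : 2 * k + 1 ≤ n) {i : ℕ} (hI : i + 1 < n.gcd k) :
    (symmDiffGraph n k r).Adj (phi n k r i 0) (phi n k r (i+1) 1) := by
  have hm3 := three_le_m (n := n) hk hn
  constructor
  · intro h
    obtain ⟨e1, e2⟩ := phi_eq hk hn (by omega) (by omega) (by omega) (by omega) h
    omega
  · refine Or.inr ⟨⟨i, hI, Or.inr (Or.inr (Or.inr (Or.inr ⟨(glue_pt1 i).symm, (glue_pt4 i).symm⟩)))⟩, ?_⟩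
    rintro (hc | hc)
    · rw [← phi_succ] at hc
      obtain ⟨e1, e2⟩ := phi_eq hk hn (by omega) (by omega) (by omega) (by omega) hc
      omega
    · rw [← phi_succ] at hc
      obtain ⟨e1, e2⟩ := phi_eq hk hn (by omega) (by omega) (by omega) (by omega) hc
      omega

lemma adj_D2 (hk : 1 ≤ k) (hn : 2 * k + 1 ≤ n) {i : ℕ} (hI : i + 1 < n.gcd k) :
    (symmDiffGraph n k r).Adj (phi n k r i 1) (phi n k r (i+1) 2) := by
  have hm3 := three_le_m (n := n) hk hn
  constructor
  · intro h
    obtain ⟨e1, e2⟩ := phi_eq hk hn (by omega) (by omega) (by omega) (by omega) h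
    omega
  · refine Or.inr ⟨⟨i, hI, Or.inr (Or.inl (Or.inl ⟨(glue_pt2 i).symm, (glue_pt3 i).symm⟩))⟩, ?_⟩
    rintro (hc | hc)
    · rw [← phi_succ] at hc
      obtain ⟨e1, e2⟩ := phi_eq hk hn (by omega) (by omega) (by omega) (by omega) hc
      omega
    · rw [← phi_succ] at hc
      rcases Nat.lt_or_ge 3 (n / n.gcd k) with hlt | hge
      · obtain ⟨e1, e2⟩ := phi_eq hk hn (by omega) (by omega) (by omega) hlt hc
        omega
      · have h3 : 2 + 1 = n / n.gcd k := by omega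
        rw [h3, phi_m] at hc
        obtain ⟨e1, e2⟩ := phi_eq hk hn (by omega) (by omega) (by omega) (by omega) hc
        omega

section Generic

variable {V : Type*} {G : SimpleGraph V} {v : V}

/-- Build a walk from `u` to `v` along the list `l ++ [v]`. -/
def mkWalk : ∀ (u : V) (l : List V), List.Chain G.Adj u (l ++ [v]) → G.Walk u v
  | _, [], h => SimpleGraph.Walk.cons (List.chain_cons.mp h).1 SimpleGraph.Walk.nil
  | _, w :: l, h => SimpleGraph.Walk.cons (List.chain_cons.mp h).1
      (mkWalk w l (List.chain_cons.mp h).2)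

lemma mkWalk_support : ∀ (u : V) (l : List V) (h : List.Chain G.Adj u (l ++ [v])),
    (mkWalk u l h).support = u :: (l ++ [v])
  | _, [], _ => rfl
  | u, w :: l, h => by
    show u :: (mkWalk w l _).support = _
    exact congrArg (u :: ·) (mkWalk_support w l _)

lemma edge_fst_eq {u w x : V} (q : G.Walk u w) (hq : q.support.Nodup)
    (he : s(u, x) ∈ q.edges) : x = q.getVert 1 := by
  induction q with
  | nil => simp at he
  | @cons a b c h' q' ih =>
    rw [SimpleGraph.Walk.edges_cons, List.mem_cons] at he
    rcases he with he | he
    · rw [Sym2.eq_iff] at he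
      rcases he with ⟨-, he⟩ | ⟨hab, -⟩
      · simp [he]
      · exact absurd hab h'.ne
    · exfalso
      have := SimpleGraph.Walk.fst_mem_support_of_mem_edges q' he
      rw [SimpleGraph.Walk.support_cons] at hq
      exact (List.nodup_cons.mp hq).1 this

lemma hamiltonianCycle_of_list [DecidableEq V] (a : V) (l : List V)
    (hchain : List.Chain G.Adj a (l ++ [a]))
    (hnodup : (a :: l).Nodup)
    (hlen : 2 ≤ l.length)
    (hmem : ∀ w : V, w ∈ a :: l) :
    ∃ p : G.Walk a a, p.IsHamiltonianCycle := by
  obtain ⟨b, l', rfl⟩ : ∃ b l', l = b :: l' := by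
    rcases l with _ | ⟨b, l'⟩
    · simp at hlen
    · exact ⟨b, l', rfl⟩
  obtain ⟨c, l'', rfl⟩ : ∃ c l'', l' = c :: l'' := by
    rcases l' with _ | ⟨c, l''⟩
    · simp at hlen
    · exact ⟨c, l'', rfl⟩
  set q : G.Walk b a := mkWalk b (c :: l'') (List.chain_cons.mp hchain).2 with hqdef
  have hqsupp : q.support = b :: (c :: l'' ++ [a]) := mkWalk_support _ _ _
  have hqnodup : q.support.Nodup := by
    rw [hqsupp]
    have h2 : ((b :: c :: l'') ++ [a]).Nodup :=
      (List.perm_append_singleton _ _).nodup_iff.mpr hnodup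
    simpa using h2
  have hpath : q.IsPath := SimpleGraph.Walk.IsPath.mk' hqnodup
  refine ⟨SimpleGraph.Walk.cons (List.chain_cons.mp hchain).1 q, ?_⟩
  rw [SimpleGraph.Walk.isHamiltonianCycle_iff_isCycle_and_support_count_tail_eq_one]
  constructor
  · rw [SimpleGraph.Walk.cons_isCycle_iff]
    refine ⟨hpath, fun he => ?_⟩
    rw [Sym2.eq_swap] at he
    have hx := edge_fst_eq q hqnodup he
    have hq1 : q.getVert 1 = c := by
      show (SimpleGraph.Walk.cons (List.chain_cons.mp (List.chain_cons.mp hchain).2).1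
        (mkWalk c l'' (List.chain_cons.mp (List.chain_cons.mp hchain).2).2)).getVert 1 = c
      rw [SimpleGraph.Walk.getVert_cons_succ, SimpleGraph.Walk.getVert_zero]
    rw [hq1] at hx
    simp only [List.nodup_cons, List.mem_cons] at hnodup
    exact hnodup.1 (Or.inr (Or.inl hx))
  · intro w
    have hsupp : (SimpleGraph.Walk.cons (List.chain_cons.mp hchain).1 q).support
        = a :: (b :: c :: l'' ++ [a]) := by
      rw [SimpleGraph.Walk.support_cons, hqsupp]
      simp
    rw [hsupp]
    simp only [List.tail_cons]
    rcases eq_or_ne w a with rfl | hw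
    · rw [List.count_append]
      have h1 : List.count w (b :: c :: l'') = 0 := by
        rw [List.count_eq_zero]
        intro hmem'
        simp only [List.nodup_cons] at hnodup
        exact hnodup.1 hmem'
      rw [h1]
      simp
    · rw [List.count_append]
      have h2 : List.count w [a] = 0 := by
        rw [List.count_eq_zero]
        simp [hw]
      have h3 : w ∈ (b :: c :: l'') := by
        have := hmem w
        simp only [List.mem_cons] at this ⊢
        rcases this with h | h
        · exact absurd h hw
        · exact h
      have h4 : List.count w (b :: c :: l'') = 1 :=
        List.count_eq_one_of_mem (by exact (List.nodup_cons.mp hnodup).2) h3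
      rw [h2, h4]

end Generic

/-! ### The coordinate lists describing the merged cycle -/

def rowFwd (m i : ℕ) : List (ℕ × ℕ) := (List.range' 2 (m-2)).map (fun j => (i, j)) ++ [(i, 0)]

def rowRev (m i : ℕ) : List (ℕ × ℕ) := (rowFwd m i).reverse

def ramp (m : ℕ) : List (ℕ × ℕ) := (List.range' 2 (m-2)).map (fun j => (0, j))

def snake (m : ℕ) : ℕ → ℕ → List (ℕ × ℕ)
  | 0, i => (i+1, 1) :: rowRev m (i+1)
  | 1, i => (i+1, 1) :: (rowFwd m (i+2) ++ ((i+2, 1) :: rowRev m (i+1)))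
  | (d+2), i => (i+1, 1) :: (rowFwd m (i+2) ++ (snake m d (i+2) ++ ((i+2, 1) :: rowRev m (i+1))))

lemma mem_rowFwd {m i : ℕ} (hm : 3 ≤ m) {p : ℕ × ℕ} :
    p ∈ rowFwd m i ↔ p.1 = i ∧ p.2 < m ∧ p.2 ≠ 1 := by
  obtain ⟨p1, p2⟩ := p
  simp only [rowFwd, List.mem_append, List.mem_map, List.mem_range'_1, List.mem_singleton,
    Prod.mk.injEq]
  constructor
  · rintro (⟨j, ⟨h2, hj⟩, h5, h6⟩ | ⟨h5, h6⟩) <;> refine ⟨?_, ?_, ?_⟩ <;> omega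
  · rintro ⟨rfl, h2, h3⟩
    rcases Nat.eq_zero_or_pos p2 with rfl | hp
    · exact Or.inr ⟨rfl, rfl⟩
    · exact Or.inl ⟨p2, ⟨by omega, by omega⟩, rfl, rfl⟩

lemma mem_rowRev {m i : ℕ} (hm : 3 ≤ m) {p : ℕ × ℕ} :
    p ∈ rowRev m i ↔ p.1 = i ∧ p.2 < m ∧ p.2 ≠ 1 := by
  rw [rowRev, List.mem_reverse]; exact mem_rowFwd hm

lemma mem_ramp {m : ℕ} {p : ℕ × ℕ} :
    p ∈ ramp m ↔ p.1 = 0 ∧ 2 ≤ p.2 ∧ p.2 < m := by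
  obtain ⟨p1, p2⟩ := p
  simp only [ramp, List.mem_map, List.mem_range'_1, Prod.mk.injEq]
  constructor
  · rintro ⟨j, ⟨h2, hj⟩, h5, h6⟩
    refine ⟨?_, ?_, ?_⟩ <;> omega
  · rintro ⟨rfl, h2, h3⟩
    exact ⟨p2, ⟨h2, by omega⟩, rfl, rfl⟩

lemma mem_snake {m : ℕ} (hm : 3 ≤ m) : ∀ (d i : ℕ) {p : ℕ × ℕ},
    (p ∈ snake m d i ↔ i+1 ≤ p.1 ∧ p.1 ≤ i+1+d ∧ p.2 < m)
  | 0, i, p => by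
    obtain ⟨p1, p2⟩ := p
    simp only [snake, List.mem_cons, mem_rowRev hm, Prod.mk.injEq]
    constructor
    · rintro (⟨rfl, rfl⟩ | ⟨rfl, h2, h3⟩) <;> omega
    · rintro ⟨h1, h2, h3⟩
      rcases eq_or_ne p2 1 with rfl | hne
      · exact Or.inl ⟨by omega, rfl⟩
      · exact Or.inr ⟨by omega, h3, hne⟩
  | 1, i, p => by
    obtain ⟨p1, p2⟩ := p
    simp only [snake, List.mem_cons, List.mem_append, mem_rowFwd hm, mem_rowRev hm,
      Prod.mk.injEq]
    constructor
    · rintro (⟨rfl, rfl⟩ | (⟨rfl, h2, h3⟩ | (⟨rfl, rfl⟩ | ⟨rfl, h2, h3⟩))) <;> omega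
    · rintro ⟨h1, h2, h3⟩
      rcases eq_or_ne p2 1 with rfl | hne
      · rcases eq_or_ne p1 (i+1) with rfl | h1ne
        · exact Or.inl ⟨rfl, rfl⟩
        · exact Or.inr (Or.inr (Or.inl ⟨by omega, rfl⟩))
      · rcases eq_or_ne p1 (i+1) with rfl | h1ne
        · exact Or.inr (Or.inr (Or.inr ⟨rfl, h3, hne⟩))
        · exact Or.inr (Or.inl ⟨by omega, h3, hne⟩)
  | (d+2), i, p => by
    obtain ⟨p1, p2⟩ := p
    simp only [snake, List.mem_cons, List.mem_append, mem_rowFwd hm, mem_rowRev hm,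
      mem_snake hm d (i+2), Prod.mk.injEq]
    constructor
    · rintro (⟨rfl, rfl⟩ | (⟨rfl, h2, h3⟩ | (⟨h1, h2, h3⟩ | (⟨rfl, rfl⟩ | ⟨rfl, h2, h3⟩)))) <;> omega
    · rintro ⟨h1, h2, h3⟩
      rcases Nat.lt_or_ge (i+2) p1 with hgt | hle
      · exact Or.inr (Or.inr (Or.inl ⟨by omega, by omega, h3⟩))
      · rcases eq_or_ne p2 1 with rfl | hne
        · rcases eq_or_ne p1 (i+1) with rfl | h1ne
          · exact Or.inl ⟨rfl, rfl⟩
          · exact Or.inr (Or.inr (Or.inr (Or.inl ⟨by omega, rfl⟩)))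
        · rcases eq_or_ne p1 (i+1) with rfl | h1ne
          · exact Or.inr (Or.inr (Or.inr (Or.inr ⟨rfl, h3, hne⟩)))
          · exact Or.inr (Or.inl ⟨by omega, h3, hne⟩)

lemma nodup_rowFwd {m i : ℕ} : (rowFwd m i).Nodup := by
  rw [rowFwd]
  refine List.Nodup.append ?_ (List.nodup_singleton _) ?_
  · exact (List.nodup_range').map (fun a b h => by
      simpa using ((Prod.mk.injEq i a i b).mp h).2)
  · intro p hp hq
    simp only [List.mem_map, List.mem_range'_1] at hp
    simp only [List.mem_singleton] at hq
    obtain ⟨j, ⟨hj2, hj⟩, rfl⟩ := hp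
    simp only [Prod.mk.injEq] at hq
    omega

lemma nodup_rowRev {m i : ℕ} : (rowRev m i).Nodup := List.nodup_reverse.mpr nodup_rowFwd

lemma nodup_ramp {m : ℕ} : (ramp m).Nodup :=
  (List.nodup_range').map (fun a b h => by
    simpa using ((Prod.mk.injEq 0 a 0 b).mp h).2)

lemma nodup_snake {m : ℕ} (hm : 3 ≤ m) : ∀ (d i : ℕ), (snake m d i).Nodup
  | 0, i => by
    rw [snake, List.nodup_cons]
    refine ⟨?_, nodup_rowRev⟩
    rw [mem_rowRev hm]
    simp
  | 1, i => by
    rw [snake, List.nodup_cons]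
    constructor
    · simp only [List.mem_append, List.mem_cons, mem_rowFwd hm, mem_rowRev hm, Prod.mk.injEq]
      rintro (⟨h1, h2, h3⟩ | (⟨h1, h2⟩ | ⟨h1, h2, h3⟩)) <;> omega
    · refine List.Nodup.append nodup_rowFwd ?_ ?_
      · rw [List.nodup_cons, mem_rowRev hm]
        exact ⟨by simp, nodup_rowRev⟩
      · intro p hp hq
        rw [mem_rowFwd hm] at hp
        rcases List.mem_cons.mp hq with rfl | hq2
        · simp at hp
        · rw [mem_rowRev hm] at hq2
          omega
  | (d+2), i => by
    rw [snake, List.nodup_cons]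
    constructor
    · simp only [List.mem_append, List.mem_cons, mem_rowFwd hm, mem_rowRev hm,
        mem_snake hm d (i+2), Prod.mk.injEq]
      rintro (⟨h1, h2, h3⟩ | (⟨h1, h2, h3⟩ | (⟨h1, h2⟩ | ⟨h1, h2, h3⟩))) <;> omega
    · refine List.Nodup.append nodup_rowFwd ?_ ?_
      · refine List.Nodup.append (nodup_snake hm d (i+2)) ?_ ?_
        · rw [List.nodup_cons, mem_rowRev hm]
          exact ⟨by simp, nodup_rowRev⟩
        · intro p hp hq
          rw [mem_snake hm d (i+2)] at hp
          rcases List.mem_cons.mp hq with rfl | hq2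
          · omega
          · rw [mem_rowRev hm] at hq2
            omega
      · intro p hp hq
        rw [mem_rowFwd hm] at hp
        rcases List.mem_append.mp hq with hq2 | hq2
        · rw [mem_snake hm d (i+2)] at hq2
          omega
        · rcases List.mem_cons.mp hq2 with rfl | hq3
          · simp at hp
          · rw [mem_rowRev hm] at hq3
            omega

/-! ### Head, last, and chain lemmas -/

lemma rowFwd_ne_nil {m i : ℕ} : rowFwd m i ≠ [] := by simp [rowFwd]

lemma rowRev_ne_nil {m i : ℕ} : rowRev m i ≠ [] := by
  simp only [rowRev, ne_eq, List.reverse_eq_nil_iff]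
  exact rowFwd_ne_nil

lemma getLast?_cons_of_ne_nil {α : Type*} (x : α) {l : List α} (h : l ≠ []) :
    (x :: l).getLast? = l.getLast? := by
  rw [show x :: l = [x] ++ l from rfl, List.getLast?_append_of_ne_nil _ h]

lemma rowFwd_last {m i : ℕ} : (rowFwd m i).getLast? = some (i, 0) := by
  rw [rowFwd, List.getLast?_append_of_ne_nil _ (by simp)]
  rfl

lemma rowFwd_head {m i : ℕ} (hm : 3 ≤ m) : (rowFwd m i).head? = some (i, 2) := by
  rw [rowFwd]
  have h : m - 2 = (m - 3) + 1 := by omega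
  rw [h, List.range'_succ, List.map_cons]
  rfl

lemma rowRev_head {m i : ℕ} : (rowRev m i).head? = some (i, 0) := by
  rw [rowRev, List.head?_reverse, rowFwd_last]

lemma rowRev_last {m i : ℕ} (hm : 3 ≤ m) : (rowRev m i).getLast? = some (i, 2) := by
  rw [rowRev, ← List.head?_reverse, List.reverse_reverse, rowFwd_head hm]

lemma snake_head {m : ℕ} (d i : ℕ) : (snake m d i).head? = some (i+1, 1) := by
  rcases d with _ | _ | d <;> rfl

lemma snake_ne_nil {m d i : ℕ} : snake m d i ≠ [] := by
  rcases d with _ | _ | d <;> simp [snake]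

lemma snake_last {m : ℕ} (hm : 3 ≤ m) : ∀ (d i : ℕ), (snake m d i).getLast? = some (i+1, 2)
  | 0, i => by
    rw [snake, getLast?_cons_of_ne_nil _ rowRev_ne_nil, rowRev_last hm]
  | 1, i => by
    rw [snake, getLast?_cons_of_ne_nil _ (by simp),
      List.getLast?_append_of_ne_nil _ (by simp),
      getLast?_cons_of_ne_nil _ rowRev_ne_nil, rowRev_last hm]
  | (d+2), i => by
    rw [snake, getLast?_cons_of_ne_nil _ (by simp),
      List.getLast?_append_of_ne_nil _ (by simp),
      List.getLast?_append_of_ne_nil _ (by simp),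
      getLast?_cons_of_ne_nil _ rowRev_ne_nil, rowRev_last hm]

lemma getLast?_map_range' {α : Type*} (f : ℕ → α) :
    ∀ (len a : ℕ), 0 < len → ((List.range' a len).map f).getLast? = some (f (a + len - 1))
  | 1, a, _ => by simp [List.range'_succ]
  | (len+2), a, _ => by
    rw [List.range'_succ, List.map_cons,
      getLast?_cons_of_ne_nil _ (by rw [List.range'_succ]; simp),
      getLast?_map_range' f (len+1) (a+1) (by omega)]
    have h : a + 1 + (len + 1) - 1 = a + (len + 2) - 1 := by omega
    rw [h]


lemma mem_opt {α : Type*} {y q : α} (h : y ∈ some q) : y = q :=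
  (Option.mem_some_iff.mp h).symm

/-- Adjacency transported to grid coordinates. -/
abbrev AdjC (n k r : ℕ) (p q : ℕ × ℕ) : Prop :=
  (symmDiffGraph n k r).Adj (phi n k r p.1 p.2) (phi n k r q.1 q.2)

lemma adjC_wrap (hk : 1 ≤ k) (hn : 2 * k + 1 ≤ n) {i : ℕ} (hi : i < n.gcd k) :
    AdjC n k r (i, n / n.gcd k - 1) (i, 0) := by
  have hm := three_le_m (n := n) hk hn
  have h := adj_row (r := r) hk hn (i := i) (j := n / n.gcd k - 1) hi (by omega)
    (by omega) (by omega)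
  rwa [show n / n.gcd k - 1 + 1 = n / n.gcd k by omega, phi_m] at h

lemma chain_row_seg (hk : 1 ≤ k) (hn : 2 * k + 1 ≤ n) {i : ℕ} (hi : i < n.gcd k) :
    ∀ (len a : ℕ), 2 ≤ a → a + len ≤ n / n.gcd k →
      List.Chain' (AdjC n k r) ((List.range' a len).map (fun j => (i, j))) := by
  intro len
  induction len with
  | zero => intro a _ _; exact List.isChain_nil
  | succ len ih =>
    intro a ha hlen
    rw [List.range'_succ, List.map_cons, List.Chain', List.isChain_cons]
    refine ⟨?_, ih (a+1) (by omega) (by omega)⟩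
    intro y hy
    cases len with
    | zero => simp at hy
    | succ len' =>
      rw [List.range'_succ, List.map_cons] at hy
      simp only [List.head?_cons, Option.mem_def, Option.some.injEq] at hy
      subst hy
      exact adj_row hk hn hi (by omega) (by omega) (by omega)

lemma chain_rowFwd (hk : 1 ≤ k) (hn : 2 * k + 1 ≤ n) {i : ℕ} (hi : i < n.gcd k) :
    List.Chain' (AdjC n k r) (rowFwd (n / n.gcd k) i) := by
  have hm := three_le_m (n := n) hk hn
  rw [rowFwd, List.Chain', List.isChain_append]
  refine ⟨chain_row_seg hk hn hi (n / n.gcd k - 2) 2 le_rfl (by omega), by simp, ?_⟩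
  intro x hx y hy
  rw [getLast?_map_range' _ _ _ (by omega)] at hx
  rw [List.head?_cons] at hy
  obtain rfl := mem_opt hx
  obtain rfl := mem_opt hy
  have h : 2 + (n / n.gcd k - 2) - 1 = n / n.gcd k - 1 := by omega
  rw [h]
  exact adjC_wrap hk hn hi

lemma chain_rowRev (hk : 1 ≤ k) (hn : 2 * k + 1 ≤ n) {i : ℕ} (hi : i < n.gcd k) :
    List.Chain' (AdjC n k r) (rowRev (n / n.gcd k) i) := by
  rw [rowRev, List.Chain', List.isChain_reverse]
  exact (chain_rowFwd hk hn hi).imp (fun a b h => h.symm)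

lemma chain_snake (hk : 1 ≤ k) (hn : 2 * k + 1 ≤ n) :
    ∀ (d i : ℕ), i + d + 2 = n.gcd k →
      List.Chain' (AdjC n k r) (snake (n / n.gcd k) d i)
  | 0, i, hg => by
    have hm := three_le_m (n := n) hk hn
    rw [snake, List.Chain', List.isChain_cons]
    refine ⟨?_, chain_rowRev hk hn (by omega)⟩
    intro y hy
    rw [rowRev_head] at hy
    obtain rfl := mem_opt hy
    exact (adj_row hk hn (i := i+1) (j := 0) (by omega) (by omega) (by omega) (by omega)).symm
  | 1, i, hg => by
    have hm := three_le_m (n := n) hk hn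
    rw [snake, List.Chain', List.isChain_cons]
    constructor
    · intro y hy
      rw [List.head?_append_of_ne_nil _ rowFwd_ne_nil, rowFwd_head hm] at hy
      obtain rfl := mem_opt hy
      exact adj_D2 hk hn (by omega)
    · rw [List.isChain_append]
      refine ⟨chain_rowFwd hk hn (by omega), ?_, ?_⟩
      · rw [List.isChain_cons]
        refine ⟨?_, chain_rowRev hk hn (by omega)⟩
        intro y hy
        rw [rowRev_head] at hy
        obtain rfl := mem_opt hy
        exact (adj_D1 hk hn (by omega)).symm
      · intro x hx y hy
        rw [rowFwd_last] at hx
        obtain rfl := mem_opt hx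
        rw [List.head?_cons] at hy
        obtain rfl := mem_opt hy
        exact adj_row hk hn (by omega) (by omega) (by omega) (by omega)
  | (d+2), i, hg => by
    have hm := three_le_m (n := n) hk hn
    rw [snake, List.Chain', List.isChain_cons]
    constructor
    · intro y hy
      rw [List.head?_append_of_ne_nil _ rowFwd_ne_nil, rowFwd_head hm] at hy
      obtain rfl := mem_opt hy
      exact adj_D2 hk hn (by omega)
    · rw [List.isChain_append]
      refine ⟨chain_rowFwd hk hn (by omega), ?_, ?_⟩
      · rw [List.isChain_append]
        refine ⟨chain_snake hk hn d (i+2) (by omega), ?_, ?_⟩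
        · rw [List.isChain_cons]
          refine ⟨?_, chain_rowRev hk hn (by omega)⟩
          intro y hy
          rw [rowRev_head] at hy
          obtain rfl := mem_opt hy
          exact (adj_D1 hk hn (by omega)).symm
        · intro x hx y hy
          rw [snake_last hm] at hx
          obtain rfl := mem_opt hx
          rw [List.head?_cons] at hy
          obtain rfl := mem_opt hy
          exact (adj_D2 hk hn (by omega)).symm
      · intro x hx y hy
        rw [rowFwd_last] at hx
        obtain rfl := mem_opt hx
        rw [List.head?_append_of_ne_nil _ snake_ne_nil, snake_head] at hy
        obtain rfl := mem_opt hy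
        exact adj_D1 hk hn (by omega)

/-! ### Surjectivity of `phi` on the grid -/

lemma phi_surj (hk : 1 ≤ k) (hn : 2 * k + 1 ≤ n) (w : ZMod n) :
    ∃ i j, i < n.gcd k ∧ j < n / n.gcd k ∧ phi n k r i j = w := by
  classical
  haveI : NeZero n := ⟨by omega⟩
  set S : Finset (ZMod n) :=
    (Finset.range (n.gcd k) ×ˢ Finset.range (n / n.gcd k)).image
      (fun p => phi n k r p.1 p.2) with hS
  have hinj : Set.InjOn (fun p : ℕ × ℕ => phi n k r p.1 p.2)
      ↑(Finset.range (n.gcd k) ×ˢ Finset.range (n / n.gcd k)) := by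
    intro p hp q hq hpq
    simp only [Finset.coe_product, Set.mem_prod, Finset.mem_coe, Finset.mem_range] at hp hq
    obtain ⟨h1, h2⟩ := phi_eq (r := r) hk hn hp.1 hq.1 hp.2 hq.2 hpq
    exact Prod.ext h1 h2
  have hcard : S.card = n := by
    rw [hS, Finset.card_image_of_injOn hinj, Finset.card_product, Finset.card_range,
      Finset.card_range, Nat.mul_div_cancel' (Nat.gcd_dvd_left n k)]
  have huniv : S = Finset.univ := by
    apply Finset.eq_univ_of_card
    rw [hcard, ZMod.card]
  have hw : w ∈ S := by rw [huniv]; exact Finset.mem_univ w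
  rw [hS, Finset.mem_image] at hw
  obtain ⟨p, hp, hpw⟩ := hw
  simp only [Finset.mem_product, Finset.mem_range] at hp
  exact ⟨p.1, p.2, hp.1, hp.2, hpw⟩

/-! ### Ramp lemmas and final assembly -/

lemma ramp_ne_nil {m : ℕ} (hm : 3 ≤ m) : ramp m ≠ [] := by
  rw [ramp]
  have h : m - 2 = (m - 3) + 1 := by omega
  rw [h, List.range'_succ]
  simp

lemma ramp_head {m : ℕ} (hm : 3 ≤ m) : (ramp m).head? = some (0, 2) := by
  rw [ramp]
  have h : m - 2 = (m - 3) + 1 := by omega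
  rw [h, List.range'_succ, List.map_cons]
  rfl

lemma chain_ramp_closed (hk : 1 ≤ k) (hn : 2 * k + 1 ≤ n) :
    List.Chain' (AdjC n k r) (ramp (n / n.gcd k) ++ [(0,0)]) := by
  have hm := three_le_m (n := n) hk hn
  have hg := gcd_pos (n := n) (k := k) hn
  rw [ramp, List.Chain', List.isChain_append]
  refine ⟨chain_row_seg hk hn (by omega) (n / n.gcd k - 2) 2 le_rfl (by omega), by simp, ?_⟩
  intro x hx y hy
  rw [getLast?_map_range' _ _ _ (by omega)] at hx
  rw [List.head?_cons] at hy
  obtain rfl := mem_opt hx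
  obtain rfl := mem_opt hy
  have he : 2 + (n / n.gcd k - 2) - 1 = n / n.gcd k - 1 := by omega
  rw [he]
  exact adjC_wrap hk hn (by omega)

lemma chain_tail (hk : 1 ≤ k) (hn : 2 * k + 1 ≤ n) :
    List.Chain' (AdjC n k r) (((0,1) :: ramp (n / n.gcd k)) ++ [(0,0)]) := by
  have hm := three_le_m (n := n) hk hn
  have hg := gcd_pos (n := n) (k := k) hn
  rw [List.cons_append, List.Chain', List.isChain_cons]
  refine ⟨?_, chain_ramp_closed hk hn⟩
  intro y hy
  rw [List.head?_append_of_ne_nil _ (ramp_ne_nil hm), ramp_head hm] at hy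
  obtain rfl := mem_opt hy
  exact adj_row hk hn (by omega) (by omega) (by omega) (by omega)

lemma final_assembly [NeZero n] (hk : 1 ≤ k) (hn : 2 * k + 1 ≤ n) (Ctail : List (ℕ × ℕ))
    (hchain : List.Chain' (AdjC n k r) (((0,0) :: Ctail) ++ [(0,0)]))
    (hnodup : ((0,0) :: Ctail).Nodup)
    (hrange : ∀ p ∈ (0,0) :: Ctail, p.1 < n.gcd k ∧ p.2 < n / n.gcd k)
    (hmemC : ∀ p : ℕ × ℕ, p.1 < n.gcd k → p.2 < n / n.gcd k → p ∈ (0,0) :: Ctail)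
    (hlen : 2 ≤ Ctail.length) :
    ∃ (a : ZMod n) (p : (symmDiffGraph n k r).Walk a a), p.IsHamiltonianCycle := by
  classical
  refine ⟨phi n k r 0 0,
    hamiltonianCycle_of_list (phi n k r 0 0) (Ctail.map (fun p => phi n k r p.1 p.2))
      ?_ ?_ ?_ ?_⟩
  · have h := (List.isChain_map (fun p : ℕ × ℕ => phi n k r p.1 p.2)).mpr hchain
    rw [List.map_append, List.map_cons, List.map_singleton] at h
    exact h
  · have h := List.Nodup.map_on (l := (0,0) :: Ctail)
      (f := fun p : ℕ × ℕ => phi n k r p.1 p.2) ?_ hnodup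
    · rw [List.map_cons] at h
      exact h
    · intro x hx y hy hxy
      obtain ⟨hx1, hx2⟩ := hrange x hx
      obtain ⟨hy1, hy2⟩ := hrange y hy
      obtain ⟨h1, h2⟩ := phi_eq (r := r) hk hn hx1 hy1 hx2 hy2 hxy
      exact Prod.ext h1 h2
  · simpa using hlen
  · intro w
    obtain ⟨i, j, hi, hj, rfl⟩ := phi_surj (r := r) hk hn w
    have hmm := hmemC (i, j) hi hj
    have h := List.mem_map_of_mem (f := fun p : ℕ × ℕ => phi n k r p.1 p.2) hmm
    rw [List.map_cons] at h
    exact h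

end SDAux




/-- Taking the symmetric difference of the union of the `g = gcd(n,k)` cycles
`C(s_i) = (s_{i+kj})_j` with the 4-cycles
`(s_{r+j}, s_{r+j+k}, s_{r+j+2k+1}, s_{r+j+k+1})`, `j = 0,…,g-2`, yields a single
cycle on the vertex set `{s_0, …, s_{n-1}}` (identified with `ℤ/nℤ` via `i ↦ s_i`). -/
theorem symmDiff_single_cycle (n k r : ℕ) [NeZero n] (hk : 1 ≤ k) (hn : 2 * k + 1 ≤ n)
    (hr : r < n) :
    ∃ (a : ZMod n) (p : (symmDiffGraph n k r).Walk a a), p.IsHamiltonianCycle := by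
  classical
  have hm3 : 3 ≤ n / n.gcd k := SDAux.three_le_m hk hn
  have hg1 : 0 < n.gcd k := SDAux.gcd_pos hn
  rcases Nat.lt_or_ge (n.gcd k) 2 with hg | hg
  · -- `gcd = 1`: a single cycle, no gluing needed
    have hgeq : n.gcd k = 1 := by omega
    apply SDAux.final_assembly hk hn ((0,1) :: SDAux.ramp (n / n.gcd k))
    · rw [List.cons_append, List.Chain', List.isChain_cons]
      refine ⟨?_, SDAux.chain_tail hk hn⟩
      intro y hy
      rw [List.cons_append, List.head?_cons] at hy
      obtain rfl := SDAux.mem_opt hy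
      exact SDAux.adj_row hk hn (by omega) (by omega) (by omega) (by omega)
    · rw [List.nodup_cons]
      constructor
      · intro hcon
        rcases List.mem_cons.mp hcon with heq | hcon2
        · simp [Prod.ext_iff] at heq
        · rw [SDAux.mem_ramp] at hcon2
          simp at hcon2
      · rw [List.nodup_cons]
        refine ⟨?_, SDAux.nodup_ramp⟩
        intro hcon
        rw [SDAux.mem_ramp] at hcon
        simp at hcon
    · intro p hp
      rcases List.mem_cons.mp hp with rfl | hp2
      · exact ⟨by omega, by omega⟩
      rcases List.mem_cons.mp hp2 with rfl | hp3
      · exact ⟨by omega, by omega⟩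
      · rw [SDAux.mem_ramp] at hp3
        obtain ⟨h1, h2, h3⟩ := hp3
        exact ⟨by omega, h3⟩
    · intro p h1 h2
      obtain ⟨p1, p2⟩ := p
      simp only at h1 h2
      have hp1 : p1 = 0 := by omega
      subst hp1
      rcases Nat.eq_zero_or_pos p2 with rfl | hp2
      · exact List.mem_cons_self
      rcases eq_or_ne p2 1 with rfl | hne
      · exact List.mem_cons_of_mem _ (List.mem_cons_self)
      · refine List.mem_cons_of_mem _ (List.mem_cons_of_mem _ ?_)
        rw [SDAux.mem_ramp]
        exact ⟨rfl, by omega, h2⟩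
    · have := List.length_pos_iff.mpr (SDAux.ramp_ne_nil hm3)
      simp only [List.length_cons]
      omega
  · -- `gcd ≥ 2`: the glued snake
    apply SDAux.final_assembly hk hn
      (SDAux.snake (n / n.gcd k) (n.gcd k - 2) 0 ++ ((0,1) :: SDAux.ramp (n / n.gcd k)))
    · rw [List.cons_append, List.Chain', List.isChain_cons]
      constructor
      · intro y hy
        rw [List.append_assoc, List.head?_append_of_ne_nil _ SDAux.snake_ne_nil,
          SDAux.snake_head] at hy
        obtain rfl := SDAux.mem_opt hy
        exact SDAux.adj_D1 hk hn (by omega)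
      · rw [List.append_assoc, List.isChain_append]
        refine ⟨SDAux.chain_snake hk hn (n.gcd k - 2) 0 (by omega), SDAux.chain_tail hk hn, ?_⟩
        intro x hx y hy
        rw [SDAux.snake_last hm3] at hx
        rw [List.cons_append, List.head?_cons] at hy
        obtain rfl := SDAux.mem_opt hx
        obtain rfl := SDAux.mem_opt hy
        exact (SDAux.adj_D2 hk hn (by omega)).symm
    · rw [List.nodup_cons]
      constructor
      · intro hcon
        rcases List.mem_append.mp hcon with hc2 | hc2
        · rw [SDAux.mem_snake hm3] at hc2
          simp at hc2
        rcases List.mem_cons.mp hc2 with heq | hc3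
        · simp [Prod.ext_iff] at heq
        · rw [SDAux.mem_ramp] at hc3
          simp at hc3
      · refine List.Nodup.append (SDAux.nodup_snake hm3 _ _) ?_ ?_
        · rw [List.nodup_cons]
          refine ⟨?_, SDAux.nodup_ramp⟩
          intro hcon
          rw [SDAux.mem_ramp] at hcon
          simp at hcon
        · intro p hp hq
          rw [SDAux.mem_snake hm3] at hp
          rcases List.mem_cons.mp hq with rfl | hq2
          · simp at hp
          · rw [SDAux.mem_ramp] at hq2
            omega
    · intro p hp
      rcases List.mem_cons.mp hp with rfl | hp2
      · exact ⟨by omega, by omega⟩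
      rcases List.mem_append.mp hp2 with hp3 | hp3
      · rw [SDAux.mem_snake hm3] at hp3
        obtain ⟨h1, h2, h3⟩ := hp3
        exact ⟨by omega, h3⟩
      rcases List.mem_cons.mp hp3 with rfl | hp4
      · exact ⟨by omega, by omega⟩
      · rw [SDAux.mem_ramp] at hp4
        obtain ⟨h1, h2, h3⟩ := hp4
        exact ⟨by omega, h3⟩
    · intro p h1 h2
      obtain ⟨p1, p2⟩ := p
      simp only at h1 h2
      rcases Nat.eq_zero_or_pos p1 with rfl | hp1
      · rcases Nat.eq_zero_or_pos p2 with rfl | hp2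
        · exact List.mem_cons_self
        rcases eq_or_ne p2 1 with rfl | hne
        · exact List.mem_cons_of_mem _ (List.mem_append_right _ (List.mem_cons_self))
        · refine List.mem_cons_of_mem _
            (List.mem_append_right _ (List.mem_cons_of_mem _ ?_))
          rw [SDAux.mem_ramp]
          exact ⟨rfl, by omega, h2⟩
      · refine List.mem_cons_of_mem _ (List.mem_append_left _ ?_)
        rw [SDAux.mem_snake hm3]
        exact ⟨by omega, by omega, h2⟩
    · have := List.length_pos_iff.mpr (SDAux.ramp_ne_nil hm3)
      simp only [List.length_append, List.length_cons]
      omega
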